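/- A ring R is Zhou nil-clean if and only if for every a in R the element a - a^5 is nilpotent. -/

import Mathlib

section Helpers
variable {T : Type*} [CommRing T]

private lemma Nadd {x y : T} (hx : IsNilpotent x) (hy : IsNilpotent y) :
    IsNilpotent (x + y) := (Commute.all x y).isNilpotent_add hx hy

private lemma Nsub {x y : T} (hx : IsNilpotent x) (hy : IsNilpotent y) :
    IsNilpotent (x - y) := (Commute.all x y).isNilpotent_sub hx hy

private lemma Nmul {x : T} (y : T) (hx : IsNilpotent x) : IsNilpotent (x * y) :=
  (Commute.all x y).isNilpotent_mul_right hx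

private lemma Nmul' (y : T) {x : T} (hx : IsNilpotent x) : IsNilpotent (y * x) :=
  (Commute.all y x).isNilpotent_mul_left hx

private lemma Nroot {x : T} {k : ℕ} (hk : k ≠ 0) (h : IsNilpotent (x ^ k)) :
    IsNilpotent x := by
  obtain ⟨n, hn⟩ := h
  exact ⟨k * n, by rw [pow_mul, hn]⟩

private lemma nil_idem_zero {e : T} (he : e * e = e) (hn : IsNilpotent e) : e = 0 := by
  obtain ⟨n, hn⟩ := hn
  have hpow : ∀ m : ℕ, e = e ^ (m + 1) := by
    intro m
    induction m with
    | zero => rw [pow_one]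
    | succ k ih => rw [pow_succ, ← ih, he]
  calc e = e ^ (n + 1) := hpow n
    _ = e ^ n * e := pow_succ e n
    _ = 0 := by rw [hn, zero_mul]

private lemma trip_add {t e : T} (ht : t ^ 3 = t) (he : e * e = e) (hte : t * e = 0) :
    (t + e) ^ 3 = t + e := by
  linear_combination ht + (3*t + 3*e) * hte + (e + 1) * he

private lemma trip_sub {t e : T} (ht : t ^ 3 = t) (he : e * e = e) (hte : t * e = 0) :
    (t - e) ^ 3 = t - e := by
  linear_combination ht + (3*e - 3*t) * hte - (e + 1) * he

private lemma idem_trip {e : T} (he : e * e = e) : e ^ 3 = e := by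
  linear_combination (e + 1) * he

private lemma idem_lift : ∀ (n : ℕ) (b : T), (b ^ 2 - b) ^ n = 0 →
    ∃ e c u : T, e * e = e ∧ e = b * c ∧ e - b = (b ^ 2 - b) * u := by
  intro n
  induction n with
  | zero =>
    intro b h
    rw [pow_zero] at h
    have hb : b = 0 := by
      calc b = b * 1 := (mul_one b).symm
        _ = b * 0 := by rw [h]
        _ = 0 := mul_zero b
    exact ⟨0, 0, 0, by ring, by ring, by rw [hb]; ring⟩
  | succ n ih =>
    intro b h
    rcases Nat.eq_zero_or_pos n with h0 | hpos
    · subst h0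
      rw [pow_one] at h
      exact ⟨b, b, 0, by linear_combination h, by linear_combination -h, by ring⟩
    · have hkey : (3*b^2 - 2*b^3) ^ 2 - (3*b^2 - 2*b^3) = (b^2 - b)^2 * (4*b^2 - 4*b - 3) := by
        ring
      have h2 : ((3*b^2 - 2*b^3) ^ 2 - (3*b^2 - 2*b^3)) ^ n = 0 := by
        rw [hkey, mul_pow, ← pow_mul]
        have he : (b^2 - b) ^ (2*n) = (b^2 - b) ^ (n+1) * (b^2 - b) ^ (n-1) := by
          rw [← pow_add]; congr 1; omega
        rw [he, h, zero_mul, zero_mul]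
      obtain ⟨e, c, u, he, hec, heu⟩ := ih (3*b^2 - 2*b^3) h2
      refine ⟨e, (3*b - 2*b^2) * c, (b^2 - b) * (4*b^2 - 4*b - 3) * u - (2*b - 1), he, ?_, ?_⟩
      · rw [hec]; ring
      · linear_combination heu + u * hkey

private lemma pair_idem (u v : T) (huv : u + v = 1) (h : IsNilpotent (u * v)) :
    ∃ e cu cv : T, e * e = e ∧ e = u * cu ∧ 1 - e = v * cv := by
  obtain ⟨n, hn⟩ := h
  have hn' : (u * v) ^ (n + 1) = 0 := by rw [pow_succ, hn, zero_mul]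
  have hv : v = 1 - u := by linear_combination huv
  subst hv
  have hgeom : (∑ i ∈ Finset.range (n+1), u ^ i) * (u - 1) = u ^ (n+1) - 1 :=
    geom_sum_mul u (n+1)
  have hδ : (u ^ (n+1)) ^ 2 - u ^ (n+1)
      = (u * (1 - u)) * (-(u ^ n * ∑ i ∈ Finset.range (n+1), u ^ i)) := by
    linear_combination (-(u ^ (n+1))) * hgeom
  have hδn : ((u ^ (n+1)) ^ 2 - u ^ (n+1)) ^ (n+1) = 0 := by
    rw [hδ, mul_pow, hn', zero_mul]
  obtain ⟨e, c, u', he, hec, heu⟩ := idem_lift (n+1) (u ^ (n+1)) hδn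
  refine ⟨e, u ^ n * c,
    (∑ i ∈ Finset.range (n+1), u ^ i) + u ^ (n+1) * (∑ i ∈ Finset.range (n+1), u ^ i) * u',
    he, ?_, ?_⟩
  · rw [hec]; ring
  · linear_combination hgeom - heu - u' * hδ

end Helpers

section CRT
variable {T : Type*} [CommRing T]

private lemma crt_idems (h30 : IsNilpotent (30 : T)) :
    ∃ f2 f3 f5 : T, (f2 * f2 = f2) ∧ (f3 * f3 = f3) ∧ (f5 * f5 = f5) ∧
      f2 * f3 = 0 ∧ f2 * f5 = 0 ∧ f3 * f5 = 0 ∧ f2 + f3 + f5 = 1 ∧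
      IsNilpotent (2 * f2) ∧ IsNilpotent (3 * f3) ∧ IsNilpotent (5 * f5) := by
  have h2 : IsNilpotent ((15 : T) * (-14)) := by
    have : (15 : T) * (-14) = 30 * (-7) := by norm_num
    rw [this]; exact Nmul _ h30
  have h3 : IsNilpotent ((10 : T) * (-9)) := by
    have : (10 : T) * (-9) = 30 * (-3) := by norm_num
    rw [this]; exact Nmul _ h30
  have h5 : IsNilpotent ((6 : T) * (-5)) := by
    have : (6 : T) * (-5) = 30 * (-1) := by norm_num
    rw [this]; exact Nmul _ h30
  obtain ⟨e2, c2, d2, he2, hc2, hd2⟩ := pair_idem (15 : T) (-14) (by norm_num) h2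
  obtain ⟨e3, c3, d3, he3, hc3, hd3⟩ := pair_idem (10 : T) (-9) (by norm_num) h3
  obtain ⟨e5, c5, d5, he5, hc5, hd5⟩ := pair_idem (6 : T) (-5) (by norm_num) h5
  refine ⟨e2, e3 * (1 - e2), e5 * (1 - e2) * (1 - e3), he2, ?_, ?_, ?_, ?_, ?_, ?_, ?_, ?_, ?_⟩
  · linear_combination ((1-e2)*(1-e2)) * he3 + e3 * he2
  · linear_combination ((1-e2)*(1-e2)*(1-e3)*(1-e3)) * he5 + (e5*(1-e3)*(1-e3)) * he2
      + (e5*(1-e2)) * he3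
  · linear_combination (-e3) * he2
  · linear_combination (-(e5*(1-e3))) * he2
  · linear_combination (-(e5*(1-e2)*(1-e2))) * he3
  · -- sum = 1
    have hgnil : IsNilpotent ((1-e2)*(1-e3)*(1-e5)) := by
      have : (1-e2)*(1-e3)*(1-e5) = 30 * (-21 * (d2 * (d3 * d5))) := by
        rw [hd2, hd3, hd5]; ring
      rw [this]; exact Nmul _ h30
    have hgidem : ((1-e2)*(1-e3)*(1-e5)) * ((1-e2)*(1-e3)*(1-e5))
        = (1-e2)*(1-e3)*(1-e5) := by
      linear_combination ((1-e3)^2*(1-e5)^2) * he2 + ((1-e2)*(1-e5)^2) * he3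
        + ((1-e2)*(1-e3)) * he5
    have hg0 := nil_idem_zero hgidem hgnil
    linear_combination - hg0
  · have : 2 * e2 = 30 * c2 := by linear_combination 2 * hc2
    rw [this]; exact Nmul _ h30
  · have : 3 * (e3 * (1 - e2)) = 30 * (c3 * (1 - e2)) := by linear_combination (3*(1-e2)) * hc3
    rw [this]; exact Nmul _ h30
  · have : 5 * (e5 * (1 - e2) * (1 - e3)) = 30 * (c5 * (1 - e2) * (1 - e3)) := by
      linear_combination (5*(1-e2)*(1-e3)) * hc5
    rw [this]; exact Nmul _ h30

end CRT

section Fwd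
variable {T : Type*} [CommRing T]

private lemma hs5_lemma {p q : T} (hp : p ^ 3 = p) (hq : q ^ 3 = q) :
    (p + q) ^ 5 - (p + q) = 15 * (p^2*q + p*q^2) := by
  linear_combination (1 + 10*q^2 + 5*p*q + p^2) * hp + (1 + q^2 + 5*p*q + 10*p^2) * hq

private lemma lem30 {p q w : T} (hp : p ^ 3 = p) (hq : q ^ 3 = q) (hw : IsNilpotent w)
    (h3 : p + q + w = 3) : IsNilpotent (30 : T) := by
  have e1 : (p + q) ^ 5 - (p + q) = 15 * (p^2*q + p*q^2) := hs5_lemma hp hq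
  have e2 : (p + q) ^ 3 - (p + q) = 3 * (p^2*q + p*q^2) := by linear_combination hp + hq
  have hs : p + q = 3 - w := by linear_combination h3
  rw [hs] at e1 e2
  have h120 : (120 : T) = w * (274 - 225*w + 85*w^2 - 15*w^3 + w^4) := by
    linear_combination e1 - 5 * e2
  have h120n : IsNilpotent (120 : T) := by rw [h120]; exact Nmul _ hw
  have h30p : IsNilpotent ((30 : T) ^ 4) := by
    have : (30 : T) ^ 4 = 120 * 6750 := by norm_num
    rw [this]; exact Nmul _ h120n
  exact Nroot (by norm_num) h30p

private lemma fwd_main {p q w : T} (hp : p ^ 3 = p) (hq : q ^ 3 = q) (hw : IsNilpotent w)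
    (h30 : IsNilpotent (30 : T)) : IsNilpotent ((p + q + w) - (p + q + w) ^ 5) := by
  have hx2 : (p^2*q + p*q^2) ^ 2 = 2*(p^2*q^2) + 2*(p*q) := by
    linear_combination (p*q^2 + 2*q) * hp + (2*p^3 + p^2*q) * hq
  have h15x : IsNilpotent (15 * (p^2*q + p*q^2)) := by
    refine Nroot (k := 2) (by norm_num) ?_
    have : (15 * (p^2*q + p*q^2)) ^ 2 = 30 * (15 * (p^2*q^2 + p*q)) := by
      linear_combination 225 * hx2
    rw [this]; exact Nmul _ h30
  have hid : (p + q + w) - (p + q + w) ^ 5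
      = -(15 * (p^2*q + p*q^2)) + w * (1 - (5*(p+q)^4 + 10*(p+q)^3*w + 10*(p+q)^2*w^2
        + 5*(p+q)*w^3 + w^4)) := by
    linear_combination - hs5_lemma hp hq
  rw [hid]
  exact Nadd h15x.neg (Nmul _ hw)

end Fwd

section Bwd
variable {T : Type*} [CommRing T]

set_option maxHeartbeats 1000000 in
private lemma main_bwd (a : T)
    (ha1 : IsNilpotent (a^5 - a)) (ha2 : IsNilpotent ((a+1)^5 - (a+1)))
    (ha3 : IsNilpotent ((a-1)^5 - (a-1))) (h30 : IsNilpotent (30 : T)) :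
    ∃ p q w : T, p^3 = p ∧ q^3 = q ∧ IsNilpotent w ∧ a = p + q + w := by
  obtain ⟨f2, f3, f5, hf2, hf3, hf5, h23, h25, h35, hsum, ν2, ν3, ν5⟩ := crt_idems h30
  -- ### corner 2 ###
  have m1 : IsNilpotent ((a^4 + a) * f2) := by
    have e : (a^4 + a)*f2
        = (((a+1)^5 - (a+1)) - (a^5 - a))*f2 - (2*a^4+5*a^3+5*a^2+2*a)*(2*f2) := by ring
    rw [e]; exact Nsub (Nmul _ (Nsub ha2 ha1)) (Nmul' _ ν2)
  have m2 : IsNilpotent ((a^2 + a) * f2) := by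
    have e : (a^2 + a)*f2 = a*((a^4 + a)*f2) - (a^5 - a)*f2 := by ring
    rw [e]; exact Nsub (Nmul' _ m1) (Nmul _ ha1)
  have δ2 : IsNilpotent ((a*f2)^2 - a*f2) := by
    have e : (a*f2)^2 - a*f2 = (a^2+a)*f2 - a*(2*f2) := by
      linear_combination (a^2)*hf2
    rw [e]; exact Nsub m2 (Nmul' _ ν2)
  obtain ⟨k2, hk2⟩ := δ2
  obtain ⟨eA, cA, uA, heA, heAc, heAd⟩ := idem_lift k2 (a*f2) hk2
  have ndA : IsNilpotent (a*f2 - eA) := by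
    have := (heAd ▸ (Nmul uA ⟨k2, hk2⟩)).neg
    rwa [neg_sub] at this
  -- ### corner 3 ###
  have rsum : IsNilpotent (20*a^3 + 10*a) := by
    have e : 20*a^3 + 10*a
        = (((a+1)^5 - (a+1)) - (a^5-a)) + (((a-1)^5 - (a-1)) - (a^5-a)) := by ring
    rw [e]; exact Nadd (Nsub ha2 ha1) (Nsub ha3 ha1)
  have t1 : IsNilpotent ((a^3 - a)*f3) := by
    have e : (a^3 - a)*f3 = 2*((20*a^3+10*a)*f3) - (13*a^3+7*a)*(3*f3) := by ring
    rw [e]; exact Nsub (Nmul' _ (Nmul _ rsum)) (Nmul' _ ν3)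
  set gp : T := -((a^2+a)*f3) with hgp
  set gm : T := -((a^2-a)*f3) with hgm
  have δp : IsNilpotent (gp^2 - gp) := by
    have e : gp^2 - gp = (a+2)*((a^3-a)*f3) + (a^2+a)*(3*f3) := by
      rw [hgp]; linear_combination ((a^2+a)^2)*hf3
    rw [e]; exact Nadd (Nmul' _ t1) (Nmul' _ ν3)
  have δm : IsNilpotent (gm^2 - gm) := by
    have e : gm^2 - gm = (a-2)*((a^3-a)*f3) + (a^2-a)*(3*f3) := by
      rw [hgm]; linear_combination ((a^2-a)^2)*hf3
    rw [e]; exact Nadd (Nmul' _ t1) (Nmul' _ ν3)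
  have npm : IsNilpotent (gp * gm) := by
    have e : gp * gm = a*((a^3-a)*f3) := by
      rw [hgp, hgm]; linear_combination ((a^2+a)*(a^2-a))*hf3
    rw [e]; exact Nmul' _ t1
  obtain ⟨k3p, hk3p⟩ := δp
  obtain ⟨Lp, cLp, uLp, hLp, hLpc, hLpd⟩ := idem_lift k3p gp hk3p
  obtain ⟨k3m, hk3m⟩ := δm
  obtain ⟨Lm, cLm, uLm, hLm, hLmc, hLmd⟩ := idem_lift k3m gm hk3m
  have nLmLp : IsNilpotent (Lm * Lp) := by
    have e : Lm * Lp = (gp * gm) * (cLm * cLp) := by rw [hLpc, hLmc]; ring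
    rw [e]; exact Nmul _ npm
  -- ### corner 5 ###
  have nil5 : ∀ A B : T, IsNilpotent (A*((a^5-a)*f5) + B*(5*f5)) := fun A B =>
    Nadd (Nmul' _ (Nmul _ ha1)) (Nmul' _ ν5)
  set Ep0 : T := (a + 2*a^3 - 2*a^4)*f5 with hEp0
  set Em0 : T := (-a - 2*a^3 - 2*a^4)*f5 with hEm0
  set Vp0 : T := (2*a + a^2 - 2*a^3 - a^4)*f5 with hVp0
  set Vm0 : T := (-2*a + a^2 + 2*a^3 - a^4)*f5 with hVm0
  have δEp : IsNilpotent (Ep0^2 - Ep0) := by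
    have e : Ep0^2 - Ep0 = (1 - a + 2*a^2 - a^3)*((a^5-a)*f5)
        + (a^4 - a^5 + a^6 - 2*a^7 + a^8)*(5*f5) := by
      rw [hEp0]; linear_combination ((a + 2*a^3 - 2*a^4)^2)*hf5
    rw [e]; exact nil5 _ _
  have δEm : IsNilpotent (Em0^2 - Em0) := by
    have e : Em0^2 - Em0 = (-1 - a - 2*a^2 - a^3)*((a^5-a)*f5)
        + (a^4 + a^5 + a^6 + 2*a^7 + a^8)*(5*f5) := by
      rw [hEm0]; linear_combination ((-a - 2*a^3 - 2*a^4)^2)*hf5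
    rw [e]; exact nil5 _ _
  have nEpm : IsNilpotent (Ep0 * Em0) := by
    have e : Ep0 * Em0 = (a - a^3)*((a^5-a)*f5) + (-a^4 - a^6 + a^8)*(5*f5) := by
      rw [hEp0, hEm0]; linear_combination ((a + 2*a^3 - 2*a^4)*(-a - 2*a^3 - 2*a^4))*hf5
    rw [e]; exact nil5 _ _
  have δVp : IsNilpotent (Vp0^2 - Vp0) := by
    have e : Vp0^2 - Vp0 = (2 + 2*a - a^2 + a^3)*((a^5-a)*f5)
        + (a^2 + a^3 - a^4 - 2*a^5 + a^7)*(5*f5) := by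
      rw [hVp0]; linear_combination ((2*a + a^2 - 2*a^3 - a^4)^2)*hf5
    rw [e]; exact nil5 _ _
  have δVm : IsNilpotent (Vm0^2 - Vm0) := by
    have e : Vm0^2 - Vm0 = (-2 + 2*a + a^2 + a^3)*((a^5-a)*f5)
        + (a^2 - a^3 - a^4 + 2*a^5 - a^7)*(5*f5) := by
      rw [hVm0]; linear_combination ((-2*a + a^2 + 2*a^3 - a^4)^2)*hf5
    rw [e]; exact nil5 _ _
  have nVpm : IsNilpotent (Vp0 * Vm0) := by
    have e : Vp0 * Vm0 = (-a + a^3)*((a^5-a)*f5) + (-a^2 + 2*a^4 - a^6)*(5*f5) := by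
      rw [hVp0, hVm0]; linear_combination ((2*a + a^2 - 2*a^3 - a^4)*(-2*a + a^2 + 2*a^3 - a^4))*hf5
    rw [e]; exact nil5 _ _
  obtain ⟨k5a, hk5a⟩ := δEp
  obtain ⟨Mp, cMp, uMp, hMp, hMpc, hMpd⟩ := idem_lift k5a Ep0 hk5a
  obtain ⟨k5b, hk5b⟩ := δEm
  obtain ⟨Mm, cMm, uMm, hMm, hMmc, hMmd⟩ := idem_lift k5b Em0 hk5b
  obtain ⟨k5c, hk5c⟩ := δVp
  obtain ⟨Kp, cKp, uKp, hKp, hKpc, hKpd⟩ := idem_lift k5c Vp0 hk5c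
  obtain ⟨k5d, hk5d⟩ := δVm
  obtain ⟨Km, cKm, uKm, hKm, hKmc, hKmd⟩ := idem_lift k5d Vm0 hk5d
  have nMmMp : IsNilpotent (Mm * Mp) := by
    have e : Mm * Mp = (Ep0 * Em0) * (cMm * cMp) := by rw [hMpc, hMmc]; ring
    rw [e]; exact Nmul _ nEpm
  have nKmKp : IsNilpotent (Km * Kp) := by
    have e : Km * Kp = (Vp0 * Vm0) * (cKm * cKp) := by rw [hKpc, hKmc]; ring
    rw [e]; exact Nmul _ nVpm
  -- ### corner multiples ###
  have dA : eA = f2 * (a*cA) := by linear_combination heAc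
  have dLp : Lp = f3 * (-((a^2+a)*cLp)) := by
    rw [hLpc, hgp]; ring
  have dLm : Lm = f3 * (-((a^2-a)*cLm)) := by
    rw [hLmc, hgm]; ring
  have dMp : Mp = f5 * ((a + 2*a^3 - 2*a^4)*cMp) := by rw [hMpc, hEp0]; ring
  have dMm : Mm = f5 * ((-a - 2*a^3 - 2*a^4)*cMm) := by rw [hMmc, hEm0]; ring
  -- ### cross-corner zero products ###
  have o1 : eA * Lp = 0 := by
    rw [dA, dLp]; linear_combination ((a*cA)*(-((a^2+a)*cLp)))*h23
  have o2 : eA * Lm = 0 := by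
    rw [dA, dLm]; linear_combination ((a*cA)*(-((a^2-a)*cLm)))*h23
  have o3 : eA * Mp = 0 := by
    rw [dA, dMp]; linear_combination ((a*cA)*((a + 2*a^3 - 2*a^4)*cMp))*h25
  have o4 : eA * Mm = 0 := by
    rw [dA, dMm]; linear_combination ((a*cA)*((-a - 2*a^3 - 2*a^4)*cMm))*h25
  have o5 : Lp * Mp = 0 := by
    rw [dLp, dMp]; linear_combination ((-((a^2+a)*cLp))*((a + 2*a^3 - 2*a^4)*cMp))*h35
  have o6 : Lp * Mm = 0 := by
    rw [dLp, dMm]; linear_combination ((-((a^2+a)*cLp))*((-a - 2*a^3 - 2*a^4)*cMm))*h35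
  have o7 : Lm * Mp = 0 := by
    rw [dLm, dMp]; linear_combination ((-((a^2-a)*cLm))*((a + 2*a^3 - 2*a^4)*cMp))*h35
  have o8 : Lm * Mm = 0 := by
    rw [dLm, dMm]; linear_combination ((-((a^2-a)*cLm))*((-a - 2*a^3 - 2*a^4)*cMm))*h35
  -- ### tripotent assembly ###
  have hFm : (Lm*(1-Lp)) * (Lm*(1-Lp)) = Lm*(1-Lp) := by
    linear_combination ((1-Lp)*(1-Lp))*hLm + Lm*hLp
  have hGm5 : (Mm*(1-Mp)) * (Mm*(1-Mp)) = Mm*(1-Mp) := by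
    linear_combination ((1-Mp)*(1-Mp))*hMm + Mm*hMp
  have hGmq : (Km*(1-Kp)) * (Km*(1-Kp)) = Km*(1-Kp) := by
    linear_combination ((1-Kp)*(1-Kp))*hKm + Km*hKp
  have s1 : (eA + Lp)^3 = eA + Lp := trip_add (idem_trip heA) hLp o1
  have z2 : (eA + Lp) * (Lm*(1-Lp)) = 0 := by
    linear_combination (1-Lp)*o2 + (-Lm)*hLp
  have s2 : (eA + Lp - Lm*(1-Lp))^3 = eA + Lp - Lm*(1-Lp) := trip_sub s1 hFm z2
  have z3 : (eA + Lp - Lm*(1-Lp)) * Mp = 0 := by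
    linear_combination o3 + o5 + (-(1-Lp))*o7
  have s3 : (eA + Lp - Lm*(1-Lp) + Mp)^3 = eA + Lp - Lm*(1-Lp) + Mp :=
    trip_add s2 hMp z3
  have z4 : (eA + Lp - Lm*(1-Lp) + Mp) * (Mm*(1-Mp)) = 0 := by
    linear_combination (1-Mp)*o4 + (1-Mp)*o6 + (-(1-Lp)*(1-Mp))*o8 + (-Mm)*hMp
  have s4 : (eA + Lp - Lm*(1-Lp) + Mp - Mm*(1-Mp))^3
      = eA + Lp - Lm*(1-Lp) + Mp - Mm*(1-Mp) := trip_sub s3 hGm5 z4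
  have zq : Kp * (Km*(1-Kp)) = 0 := by
    linear_combination (-Km)*hKp
  have sq3 : (Kp - Km*(1-Kp))^3 = Kp - Km*(1-Kp) := trip_sub (idem_trip hKp) hGmq zq
  -- ### the nilpotent part ###
  refine ⟨eA + Lp - Lm*(1-Lp) + Mp - Mm*(1-Mp), Kp - Km*(1-Kp),
    a - (eA + Lp - Lm*(1-Lp) + Mp - Mm*(1-Mp)) - (Kp - Km*(1-Kp)), s4, sq3, ?_, by ring⟩
  have hW : a - (eA + Lp - Lm*(1-Lp) + Mp - Mm*(1-Mp)) - (Kp - Km*(1-Kp))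
      = (a*f2 - eA) + ((a*f3 - gp + gm) + (gp - Lp) + (Lm - gm) + (-(Lm*Lp)))
        + ((a*f5 - Ep0 + Em0 - Vp0 + Vm0) + (Ep0 - Mp) + (Mm - Em0) + (-(Mm*Mp))
          + (Vp0 - Kp) + (Km - Vm0) + (-(Km*Kp))) := by
    linear_combination (-a)*hsum
  rw [hW]
  have nA2 : IsNilpotent (a*f3 - gp + gm) := by
    have e : a*f3 - gp + gm = a*(3*f3) := by rw [hgp, hgm]; ring
    rw [e]; exact Nmul' _ ν3
  have nA3 : IsNilpotent (gp - Lp) := by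
    have := (hLpd ▸ (Nmul uLp ⟨k3p, hk3p⟩)).neg
    rwa [neg_sub] at this
  have nA4 : IsNilpotent (Lm - gm) := hLmd ▸ (Nmul uLm ⟨k3m, hk3m⟩)
  have nA6 : IsNilpotent (a*f5 - Ep0 + Em0 - Vp0 + Vm0) := by
    have e : a*f5 - Ep0 + Em0 - Vp0 + Vm0 = (-a)*(5*f5) := by
      rw [hEp0, hEm0, hVp0, hVm0]; ring
    rw [e]; exact Nmul' _ ν5
  have nA7 : IsNilpotent (Ep0 - Mp) := by
    have := (hMpd ▸ (Nmul uMp ⟨k5a, hk5a⟩)).neg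
    rwa [neg_sub] at this
  have nA8 : IsNilpotent (Mm - Em0) := hMmd ▸ (Nmul uMm ⟨k5b, hk5b⟩)
  have nA10 : IsNilpotent (Vp0 - Kp) := by
    have := (hKpd ▸ (Nmul uKp ⟨k5c, hk5c⟩)).neg
    rwa [neg_sub] at this
  have nA11 : IsNilpotent (Km - Vm0) := hKmd ▸ (Nmul uKm ⟨k5d, hk5d⟩)
  exact Nadd (Nadd ndA
      (Nadd (Nadd (Nadd nA2 nA3) nA4) nLmLp.neg))
    (Nadd (Nadd (Nadd (Nadd (Nadd (Nadd nA6 nA7) nA8) nMmMp.neg) nA10) nA11) nKmKp.neg)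

end Bwd

/-- A ring is Zhou nil-clean if every element is the sum of two tripotents
and a nilpotent that pairwise commute. -/
def ZhouNilClean (R : Type*) [Ring R] : Prop :=
  ∀ a : R, ∃ p q w : R, p ^ 3 = p ∧ q ^ 3 = q ∧ IsNilpotent w ∧
    Commute p q ∧ Commute p w ∧ Commute q w ∧ a = p + q + w

theorem stmt_10 (R : Type*) [Ring R] :
    ZhouNilClean R ↔ ∀ a : R, IsNilpotent (a - a ^ 5) := by
  constructor
  · intro h a
    -- 30 is nilpotent, via the decomposition of 3
    obtain ⟨p', q', w', hp', hq', hw', hpq', hpw', hqw', h3'⟩ := h 3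
    have h30R : IsNilpotent (30 : R) := by
      have hcomm3 : ∀ x ∈ ({p', q', w'} : Set R), ∀ y ∈ ({p', q', w'} : Set R),
          x * y = y * x := by
        rintro x hx y hy
        simp only [Set.mem_insert_iff, Set.mem_singleton_iff] at hx hy
        rcases hx with rfl | rfl | rfl <;> rcases hy with rfl | rfl | rfl
        exacts [rfl, hpq'.eq, hpw'.eq, hpq'.symm.eq, rfl, hqw'.eq,
          hpw'.symm.eq, hqw'.symm.eq, rfl]
      letI : CommRing ↥(Subring.closure ({p', q', w'} : Set R)) :=
        Subring.closureCommRingOfComm hcomm3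
      have hpm : p' ∈ Subring.closure ({p', q', w'} : Set R) :=
        Subring.subset_closure (by simp)
      have hqm : q' ∈ Subring.closure ({p', q', w'} : Set R) :=
        Subring.subset_closure (by simp)
      have hwm : w' ∈ Subring.closure ({p', q', w'} : Set R) :=
        Subring.subset_closure (by simp)
      have hP : (⟨p', hpm⟩ : ↥(Subring.closure ({p', q', w'} : Set R))) ^ 3 = ⟨p', hpm⟩ :=
        Subtype.ext hp'
      have hQ : (⟨q', hqm⟩ : ↥(Subring.closure ({p', q', w'} : Set R))) ^ 3 = ⟨q', hqm⟩ :=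
        Subtype.ext hq'
      have hW : IsNilpotent (⟨w', hwm⟩ : ↥(Subring.closure ({p', q', w'} : Set R))) := by
        obtain ⟨n, hn⟩ := hw'
        exact ⟨n, Subtype.ext hn⟩
      have hsum3 : (⟨p', hpm⟩ : ↥(Subring.closure ({p', q', w'} : Set R)))
          + ⟨q', hqm⟩ + ⟨w', hwm⟩ = 3 := Subtype.ext h3'.symm
      obtain ⟨n, hn⟩ := lem30 hP hQ hW hsum3
      exact ⟨n, congrArg Subtype.val hn⟩
    obtain ⟨p, q, w, hp, hq, hw, hpq, hpw, hqw, ha⟩ := h a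
    have hcomm : ∀ x ∈ ({p, q, w} : Set R), ∀ y ∈ ({p, q, w} : Set R),
        x * y = y * x := by
      rintro x hx y hy
      simp only [Set.mem_insert_iff, Set.mem_singleton_iff] at hx hy
      rcases hx with rfl | rfl | rfl <;> rcases hy with rfl | rfl | rfl
      exacts [rfl, hpq.eq, hpw.eq, hpq.symm.eq, rfl, hqw.eq,
        hpw.symm.eq, hqw.symm.eq, rfl]
    letI : CommRing ↥(Subring.closure ({p, q, w} : Set R)) :=
      Subring.closureCommRingOfComm hcomm
    have hpm : p ∈ Subring.closure ({p, q, w} : Set R) := Subring.subset_closure (by simp)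
    have hqm : q ∈ Subring.closure ({p, q, w} : Set R) := Subring.subset_closure (by simp)
    have hwm : w ∈ Subring.closure ({p, q, w} : Set R) := Subring.subset_closure (by simp)
    have hP : (⟨p, hpm⟩ : ↥(Subring.closure ({p, q, w} : Set R))) ^ 3 = ⟨p, hpm⟩ :=
      Subtype.ext hp
    have hQ : (⟨q, hqm⟩ : ↥(Subring.closure ({p, q, w} : Set R))) ^ 3 = ⟨q, hqm⟩ :=
      Subtype.ext hq
    have hW : IsNilpotent (⟨w, hwm⟩ : ↥(Subring.closure ({p, q, w} : Set R))) := by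
      obtain ⟨n, hn⟩ := hw
      exact ⟨n, Subtype.ext hn⟩
    have h30S : IsNilpotent (30 : ↥(Subring.closure ({p, q, w} : Set R))) := by
      obtain ⟨n, hn⟩ := h30R
      exact ⟨n, Subtype.ext hn⟩
    obtain ⟨n, hn⟩ := fwd_main hP hQ hW h30S
    rw [ha]
    exact ⟨n, congrArg Subtype.val hn⟩
  · intro h a
    have h30R : IsNilpotent (30 : R) := by
      have h2 := h 2
      have e : (2 : R) - 2 ^ 5 = -30 := by norm_num
      rw [e] at h2
      have := h2.neg
      rwa [neg_neg] at this
    have n1 : IsNilpotent (a ^ 5 - a) := by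
      have := (h a).neg; rwa [neg_sub] at this
    have n2 : IsNilpotent ((a + 1) ^ 5 - (a + 1)) := by
      have := (h (a + 1)).neg; rwa [neg_sub] at this
    have n3 : IsNilpotent ((a - 1) ^ 5 - (a - 1)) := by
      have := (h (a - 1)).neg; rwa [neg_sub] at this
    letI : CommRing ↥(Subring.closure ({a} : Set R)) :=
      Subring.closureCommRingOfComm (by rintro x rfl y rfl; rfl)
    have ham : a ∈ Subring.closure ({a} : Set R) := Subring.subset_closure rfl
    have hα1 : IsNilpotent ((⟨a, ham⟩ : ↥(Subring.closure ({a} : Set R))) ^ 5 - ⟨a, ham⟩) := by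
      obtain ⟨n, hn⟩ := n1
      exact ⟨n, Subtype.ext hn⟩
    have hα2 : IsNilpotent (((⟨a, ham⟩ : ↥(Subring.closure ({a} : Set R))) + 1) ^ 5
        - (⟨a, ham⟩ + 1)) := by
      obtain ⟨n, hn⟩ := n2
      exact ⟨n, Subtype.ext hn⟩
    have hα3 : IsNilpotent (((⟨a, ham⟩ : ↥(Subring.closure ({a} : Set R))) - 1) ^ 5
        - (⟨a, ham⟩ - 1)) := by
      obtain ⟨n, hn⟩ := n3
      exact ⟨n, Subtype.ext hn⟩
    have hα30 : IsNilpotent (30 : ↥(Subring.closure ({a} : Set R))) := by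
      obtain ⟨n, hn⟩ := h30R
      exact ⟨n, Subtype.ext hn⟩
    obtain ⟨p, q, w, hp, hq, hw, hsum⟩ := main_bwd _ hα1 hα2 hα3 hα30
    obtain ⟨n, hn⟩ := hw
    refine ⟨↑p, ↑q, ↑w, congrArg Subtype.val hp, congrArg Subtype.val hq,
      ⟨n, congrArg Subtype.val hn⟩, congrArg Subtype.val (mul_comm p q),
      congrArg Subtype.val (mul_comm p w), congrArg Subtype.val (mul_comm q w),
      congrArg Subtype.val hsum⟩
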